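/- Let (x_i^{0,N})_i ∈ ℝ^{dN}, (m_i^{0,N})_i ∈ ℝ^N, let ψ_i^{(N)} : (ℝ^d)^N × ℝ^N → ℝ and let φ be Lipschitz such that the system d/dt x_i = (1/N) Σ_{j=1}^N m_j φ(x_j − x_i), d/dt m_i = ψ_i^{(N)}(x,m) with this initial condition admits a unique solution (x^N, m^N). If x_k^{0,N} = x_l^{0,N} for some pair of indices (k,l), then x_k^N(t) = x_l^N(t) for all t ≥ 0. -/

import Mathlib

open MeasureTheory Set Filter Topology
open scoped NNReal ENNReal

noncomputable section

abbrev Euc (d : ℕ) := EuclideanSpace ℝ (Fin d)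

/-- `(x, m)` solves, for all `t ≥ 0`, the system
`d/dt x_i = (1/N) Σ_j m_j a(‖x_i − x_j‖)(x_j − x_i)`, `d/dt m_i = ψ_i^{(N)}(x, m)`. -/
def Sol6 {d N : ℕ} (a : ℝ → ℝ)
    (ψi : Fin N → (Fin N → Euc d) → (Fin N → ℝ) → ℝ)
    (x : ℝ → Fin N → Euc d) (m : ℝ → Fin N → ℝ) : Prop :=
  ∀ t ∈ Set.Ici (0:ℝ), ∀ i : Fin N,
    HasDerivWithinAt (fun τ => x τ i)
      ((N : ℝ)⁻¹ • ∑ j : Fin N, (m t j * a ‖x t i - x t j‖) • (x t j - x t i))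
      (Set.Ici 0) t ∧
    HasDerivWithinAt (fun τ => m τ i) (ψi i (x t) (m t)) (Set.Ici 0) t

/-- if two agents start at the same opinion, they share the same opinion
for all times (for the unique solution of the system). -/
theorem stmt6 {d N : ℕ} (hN : 0 < N)
    (a : ℝ → ℝ) (ha : Continuous a)
    (hφlip : ∃ K : ℝ≥0, LipschitzWith K (fun v : Euc d => a ‖v‖ • v))
    (ψi : Fin N → (Fin N → Euc d) → (Fin N → ℝ) → ℝ)
    (xinit : Fin N → Euc d) (minit : Fin N → ℝ)
    (x : ℝ → Fin N → Euc d) (m : ℝ → Fin N → ℝ)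
    (hsol : Sol6 a ψi x m) (hx0 : x 0 = xinit) (hm0 : m 0 = minit)
    (huniq : ∀ (x' : ℝ → Fin N → Euc d) (m' : ℝ → Fin N → ℝ),
      Sol6 a ψi x' m' → x' 0 = xinit → m' 0 = minit →
        ∀ t ∈ Set.Ici (0:ℝ), x' t = x t ∧ m' t = m t)
    (k l : Fin N) (hkl : xinit k = xinit l) :
    ∀ t ∈ Set.Ici (0:ℝ), x t k = x t l := by
  obtain ⟨K, hK⟩ := hφlip
  intro T hT
  set f : ℝ → Euc d := fun τ => x τ k - x τ l with hfdef
  set F : ℝ → Euc d := fun τ =>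
    (N : ℝ)⁻¹ • ∑ j : Fin N, ((m τ j * a ‖x τ k - x τ j‖) • (x τ j - x τ k)
      - (m τ j * a ‖x τ l - x τ j‖) • (x τ j - x τ l)) with hFdef
  have hderiv : ∀ τ ∈ Set.Ici (0:ℝ), HasDerivWithinAt f (F τ) (Set.Ici 0) τ := by
    intro τ hτ
    have h1 := (hsol τ hτ k).1
    have h2 := (hsol τ hτ l).1
    have := h1.sub h2
    simpa [hFdef, Finset.sum_sub_distrib, smul_sub] using (show HasDerivWithinAt f _ (Set.Ici 0) τ from this)
  have hfc : ContinuousOn f (Set.Ici 0) := fun τ hτ => (hderiv τ hτ).continuousWithinAt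
  have hmc : ∀ j, ContinuousOn (fun τ => m τ j) (Set.Ici 0) :=
    fun j τ hτ => ((hsol τ hτ j).2).continuousWithinAt
  have hgc : ContinuousOn (fun τ => ∑ j : Fin N, |m τ j|) (Set.Icc (0:ℝ) T) := by
    exact continuousOn_finset_sum _ fun j _ => ((hmc j).mono Set.Icc_subset_Ici_self).abs
  obtain ⟨C, hC⟩ := (isCompact_Icc : IsCompact (Set.Icc (0:ℝ) T)).exists_bound_of_continuousOn hgc
  have key : ∀ s ∈ Set.Icc (0:ℝ) T, ‖f s‖ ≤ gronwallBound 0 ((N:ℝ)⁻¹ * (C * K)) 0 (s - 0) := by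
    apply norm_le_gronwallBound_of_norm_deriv_right_le (hfc.mono Set.Icc_subset_Ici_self)
    · intro τ hτ
      exact (hderiv τ hτ.1).mono (Set.Ici_subset_Ici.2 hτ.1)
    · simp [hfdef, hx0, hkl]
    · intro τ hτ
      have hτ0 : (0:ℝ) ≤ τ := hτ.1
      have hterm : ∀ j : Fin N,
          ‖(m τ j * a ‖x τ k - x τ j‖) • (x τ j - x τ k)
            - (m τ j * a ‖x τ l - x τ j‖) • (x τ j - x τ l)‖
          ≤ |m τ j| * (K * ‖f τ‖) := by
        intro j
        have e1 : (m τ j * a ‖x τ k - x τ j‖) • (x τ j - x τ k)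
            - (m τ j * a ‖x τ l - x τ j‖) • (x τ j - x τ l)
            = m τ j • ((a ‖x τ j - x τ k‖ • (x τ j - x τ k))
              - (a ‖x τ j - x τ l‖ • (x τ j - x τ l))) := by
          simp only [smul_sub, mul_smul, norm_sub_rev (x τ k), norm_sub_rev (x τ l)]
        rw [e1, norm_smul, Real.norm_eq_abs]
        gcongr
        have := hK.dist_le_mul (x τ j - x τ k) (x τ j - x τ l)
        simp only [dist_eq_norm] at this
        calc ‖a ‖x τ j - x τ k‖ • (x τ j - x τ k) - a ‖x τ j - x τ l‖ • (x τ j - x τ l)‖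
            ≤ K * ‖(x τ j - x τ k) - (x τ j - x τ l)‖ := this
          _ = K * ‖f τ‖ := by
                rw [show (x τ j - x τ k) - (x τ j - x τ l) = -(f τ) by
                  simp only [hfdef]; abel, norm_neg]
      have hsum : ‖∑ j : Fin N, ((m τ j * a ‖x τ k - x τ j‖) • (x τ j - x τ k)
            - (m τ j * a ‖x τ l - x τ j‖) • (x τ j - x τ l))‖
          ≤ (∑ j : Fin N, |m τ j|) * (K * ‖f τ‖) := by
        calc _ ≤ ∑ j : Fin N, ‖(m τ j * a ‖x τ k - x τ j‖) • (x τ j - x τ k)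
              - (m τ j * a ‖x τ l - x τ j‖) • (x τ j - x τ l)‖ := norm_sum_le _ _
          _ ≤ ∑ j : Fin N, |m τ j| * (K * ‖f τ‖) := Finset.sum_le_sum fun j _ => hterm j
          _ = (∑ j : Fin N, |m τ j|) * (K * ‖f τ‖) := by rw [Finset.sum_mul]
      have hCτ : (∑ j : Fin N, |m τ j|) ≤ C := by
        have := hC τ ⟨hτ.1, le_of_lt hτ.2⟩
        calc (∑ j : Fin N, |m τ j|) ≤ ‖∑ j : Fin N, |m τ j|‖ := le_abs_self _
          _ ≤ C := this
      have hFnorm : ‖F τ‖ ≤ (N:ℝ)⁻¹ * ((∑ j : Fin N, |m τ j|) * (K * ‖f τ‖)) := by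
        rw [hFdef, norm_smul, Real.norm_eq_abs, abs_of_nonneg (by positivity)]
        gcongr
      rw [add_zero]
      calc ‖F τ‖ ≤ (N:ℝ)⁻¹ * ((∑ j : Fin N, |m τ j|) * (K * ‖f τ‖)) := hFnorm
        _ ≤ (N:ℝ)⁻¹ * (C * (K * ‖f τ‖)) :=
            mul_le_mul_of_nonneg_left
              (mul_le_mul_of_nonneg_right hCτ (by positivity)) (by positivity)
        _ = (N:ℝ)⁻¹ * (C * K) * ‖f τ‖ := by ring
  have := key T ⟨hT, le_refl T⟩
  rw [gronwallBound_ε0_δ0] at this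
  have : f T = 0 := norm_le_zero_iff.mp this
  have := sub_eq_zero.mp this
  exact this
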